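/- Let P ⊆ ℤⁿ be an f-antichain. Then P contains at most one point x with x₁ ≥ a, and P contains at most one point x with x₁ ≤ −a. In particular, this holds for every population of the SEMO or GSEMO optimizing f. -/
import Mathlib


namespace EvoMO

/-- Search points: integer vectors of dimension `n`. -/
abbrev Pt (n : ℕ) := Fin n → ℤ

/-- The bi-objective benchmark function
`f(x) = (|x₁ − a| + Σ_{i≥2} |x_i|, |x₁ + a| + Σ_{i≥2} |x_i|)`. -/
def benchf (n a : ℕ) [NeZero n] (x : Pt n) : ℤ × ℤ :=
  (|x 0 - (a : ℤ)| + ∑ i ∈ Finset.univ.erase (0 : Fin n), |x i|,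
   |x 0 + (a : ℤ)| + ∑ i ∈ Finset.univ.erase (0 : Fin n), |x i|)

/-- Weak dominance (for minimization): `u ⪯ v`. -/
def dominates (u v : ℤ × ℤ) : Prop := u.1 ≤ v.1 ∧ u.2 ≤ v.2

/-- Strict dominance: `u ≺ v`. -/
def sdominates (u v : ℤ × ℤ) : Prop := dominates u v ∧ u ≠ v

/-- L1-norm of an integer vector. -/
def l1 {n : ℕ} (x : Pt n) : ℤ := ∑ i, |x i|

/-- The Pareto front `F*` of the benchmark function. -/
def paretoFront (n a : ℕ) [NeZero n] : Set (ℤ × ℤ) :=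
  {p | ∃ y : Pt n, benchf n a y = p ∧ ¬ ∃ x : Pt n, sdominates (benchf n a x) (benchf n a y)}

instance (u v : ℤ × ℤ) : Decidable (dominates u v) := by
  unfold dominates; infer_instance

instance (u v : ℤ × ℤ) : Decidable (sdominates u v) := by
  unfold sdominates; infer_instance

end EvoMO

namespace EvoMO

/-- A set of search points is an `f`-antichain if no point in it weakly dominates
another (distinct) point in it. In particular, every population maintained by the
SEMO/GSEMO is an `f`-antichain. -/
def IsFAntichain (n a : ℕ) [NeZero n] (P : Set (Pt n)) : Prop :=
  ∀ x ∈ P, ∀ y ∈ P, x ≠ y → ¬ dominates (benchf n a x) (benchf n a y)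

end EvoMO

open EvoMO in
/-- **Lemma 2.** An `f`-antichain `P ⊆ ℤⁿ` contains at most one point `x` with
`x₁ ≥ a`, and at most one point `x` with `x₁ ≤ −a`. -/
theorem antichain_outside (n a : ℕ) [NeZero n] (hn : 2 ≤ n) (P : Set (Pt n))
    (hP : IsFAntichain n a P) :
    (∀ x ∈ P, ∀ y ∈ P, (a : ℤ) ≤ x 0 → (a : ℤ) ≤ y 0 → x = y) ∧
    (∀ x ∈ P, ∀ y ∈ P, x 0 ≤ -(a : ℤ) → y 0 ≤ -(a : ℤ) → x = y) := by
  constructor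
  · intro x hx y hy hxa hya
    by_contra hne
    have h1 := hP x hx y hy hne
    have h2 := hP y hy x hx (Ne.symm hne)
    simp only [benchf, dominates, not_and_or, not_le] at h1 h2
    have e1 : |x 0 - (a : ℤ)| = x 0 - a := abs_of_nonneg (by linarith)
    have e2 : |y 0 - (a : ℤ)| = y 0 - a := abs_of_nonneg (by linarith)
    have e3 : |x 0 + (a : ℤ)| = x 0 + a := abs_of_nonneg (by linarith [Int.natCast_nonneg a])
    have e4 : |y 0 + (a : ℤ)| = y 0 + a := abs_of_nonneg (by linarith [Int.natCast_nonneg a])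
    rw [e1, e2, e3, e4] at h1 h2
    set Sx := ∑ i ∈ Finset.univ.erase (0 : Fin n), |x i|
    set Sy := ∑ i ∈ Finset.univ.erase (0 : Fin n), |y i|
    rcases h1 with h1 | h1 <;> rcases h2 with h2 | h2 <;> linarith
  · intro x hx y hy hxa hya
    by_contra hne
    have h1 := hP x hx y hy hne
    have h2 := hP y hy x hx (Ne.symm hne)
    simp only [benchf, dominates, not_and_or, not_le] at h1 h2
    have e1 : |x 0 - (a : ℤ)| = -(x 0 - a) := abs_of_nonpos (by linarith)
    have e2 : |y 0 - (a : ℤ)| = -(y 0 - a) := abs_of_nonpos (by linarith)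
    have e3 : |x 0 + (a : ℤ)| = -(x 0 + a) := abs_of_nonpos (by linarith)
    have e4 : |y 0 + (a : ℤ)| = -(y 0 + a) := abs_of_nonpos (by linarith)
    rw [e1, e2, e3, e4] at h1 h2
    set Sx := ∑ i ∈ Finset.univ.erase (0 : Fin n), |x i|
    set Sy := ∑ i ∈ Finset.univ.erase (0 : Fin n), |y i|
    rcases h1 with h1 | h1 <;> rcases h2 with h2 | h2 <;> linarith
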